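/- Let 𝔽_q be a finite field, χ : 𝔽_q → ℂ a nontrivial additive character, P ∈ 𝔽_q[x₁,…,x_d] a nonzero homogeneous polynomial of degree k ≥ 1, and H = {x ∈ 𝔽_q^d : P(x) = 0}. Then for every m ∈ 𝔽_q^d one has the exact identity (q − 1) · Σ_{x∈H} χ(−m·x) = q·|H ∩ Π_m| − |H|; equivalently, Ĥ(m) = (q|H ∩ Π_m| − |H|)/(q^{d+1} − q^d). -/

import Mathlib

theorem eval_mul_smul {F : Type} [CommRing F] {σ : Type} [Fintype σ] {k : ℕ}
    (P : MvPolynomial σ F)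
    (hhom : P.IsHomogeneous k) (t : F) (x : σ → F) :
    MvPolynomial.eval (fun i => t * x i) P = t ^ k * MvPolynomial.eval x P := by
  rw [MvPolynomial.eval_eq', MvPolynomial.eval_eq', Finset.mul_sum]
  apply Finset.sum_congr rfl
  intro e he
  have hk' : ∑ i, e i = k := by
    have h1 := hhom (MvPolynomial.mem_support_iff.mp he)
    have h1 : Finsupp.degree e = k := by rw [Finsupp.degree_eq_weight_one]; exact h1
    rw [← h1, Finsupp.degree]
    exact (Finset.sum_subset (Finset.subset_univ _)
      (fun i _ hi => Finsupp.notMem_support_iff.mp hi)).symm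
  simp_rw [mul_pow]
  rw [Finset.prod_mul_distrib, Finset.prod_pow_eq_pow_sum, hk']
  ring

theorem stmt_1 {F : Type} [Field F] [Fintype F] [DecidableEq F]
    (χ : AddChar F ℂ) (hχ : χ ≠ 1)
    (d k : ℕ) (hk : 1 ≤ k)
    (P : MvPolynomial (Fin d) F) (hP : P ≠ 0) (hhom : P.IsHomogeneous k)
    (H : Finset (Fin d → F)) (hH : ∀ x, x ∈ H ↔ MvPolynomial.eval x P = 0)
    (m : Fin d → F) :
    ((Fintype.card F : ℂ) - 1) * ∑ x ∈ H, χ (-(∑ i, m i * x i))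
        = (Fintype.card F : ℂ) *
            ((H ∩ Finset.univ.filter (fun x : Fin d → F => ∑ i, m i * x i = 0)).card : ℂ)
          - (H.card : ℂ)
    ∧ ((Fintype.card F : ℂ))⁻¹ ^ d * ∑ x ∈ H, χ (-(∑ i, m i * x i))
        = ((Fintype.card F : ℂ) *
            ((H ∩ Finset.univ.filter (fun x : Fin d → F => ∑ i, m i * x i = 0)).card : ℂ)
          - (H.card : ℂ))
          / ((Fintype.card F : ℂ) ^ (d + 1) - (Fintype.card F : ℂ) ^ d) := by
  classical
  set q : ℂ := (Fintype.card F : ℂ) with hqdef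
  set S : ℂ := ∑ x ∈ H, χ (-(∑ i, m i * x i)) with hSdef
  have hprim : χ.IsPrimitive := AddChar.IsPrimitive.of_ne_one hχ
  -- membership in H is invariant under nonzero scaling
  have hmemH : ∀ (t : F), t ≠ 0 → ∀ x ∈ H, (fun j => t * x j) ∈ H := by
    intro t ht x hx
    rw [hH] at hx ⊢
    rw [eval_mul_smul P hhom, hx, mul_zero]
  -- key invariance
  have key : ∀ t : F, t ≠ 0 → (∑ x ∈ H, χ (-(t * ∑ i, m i * x i))) = S := by
    intro t ht
    rw [hSdef]
    apply Finset.sum_nbij' (i := fun x => fun j => t * x j) (j := fun y => fun j => t⁻¹ * y j)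
    · intro a ha; exact hmemH t ht a ha
    · intro a ha; exact hmemH t⁻¹ (inv_ne_zero ht) a ha
    · intro a _; funext j; field_simp
    · intro a _; funext j; field_simp
    · intro a _
      congr 1
      rw [Finset.mul_sum, neg_inj]
      exact Finset.sum_congr rfl fun i _ => by ring
  -- the filter set
  have hinter : (H ∩ Finset.univ.filter (fun x : Fin d → F => ∑ i, m i * x i = 0))
      = H.filter (fun x => ∑ i, m i * x i = 0) := by
    ext x; simp [Finset.mem_filter, Finset.mem_inter]
  have hcard2 : (2 : ℕ) ≤ Fintype.card F := Fintype.one_lt_card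
  have hq1 : q - 1 ≠ 0 := by
    rw [hqdef, sub_ne_zero]
    exact_mod_cast (by omega : Fintype.card F ≠ 1)
  have hq0 : q ≠ 0 := by
    rw [hqdef]
    exact_mod_cast (by omega : Fintype.card F ≠ 0)
  -- double sum, two ways
  have way1 : ∑ t : F, ∑ x ∈ H, χ (-(t * ∑ i, m i * x i)) = (q - 1) * S + H.card := by
    rw [← Finset.sum_erase_add _ _ (Finset.mem_univ (0 : F))]
    have h0 : ∑ x ∈ H, χ (-((0 : F) * ∑ i, m i * x i)) = (H.card : ℂ) := by
      simp
    rw [h0]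
    congr 1
    rw [Finset.sum_congr rfl (fun t ht => key t (Finset.ne_of_mem_erase ht)),
      Finset.sum_const, Finset.card_erase_of_mem (Finset.mem_univ 0), Finset.card_univ,
      nsmul_eq_mul, Nat.cast_sub (by omega), Nat.cast_one]
  have way2 : ∑ t : F, ∑ x ∈ H, χ (-(t * ∑ i, m i * x i))
      = q * ((H.filter (fun x => ∑ i, m i * x i = 0)).card : ℂ) := by
    rw [Finset.sum_comm]
    have : ∀ x ∈ H, ∑ t : F, χ (-(t * ∑ i, m i * x i))
        = if (∑ i, m i * x i) = 0 then q else 0 := by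
      intro x _
      have h2 := AddChar.sum_mulShift (ψ := χ) (-(∑ i, m i * x i)) hprim
      simp only [neg_eq_zero] at h2
      push_cast [apply_ite (fun n : ℕ => (n : ℂ))] at h2
      rw [← h2]
      apply Finset.sum_congr rfl
      intro t _
      congr 1; ring
    rw [Finset.sum_congr rfl this, ← Finset.sum_filter, Finset.sum_const, nsmul_eq_mul,
      mul_comm]
  have first : (q - 1) * S
      = q * ((H ∩ Finset.univ.filter (fun x : Fin d → F => ∑ i, m i * x i = 0)).card : ℂ)
        - (H.card : ℂ) := by
    rw [hinter]
    linear_combination way1.symm.trans way2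
  refine ⟨first, ?_⟩
  have hqd : q ^ d ≠ 0 := pow_ne_zero _ hq0
  rw [← first]
  have hden : q ^ (d + 1) - q ^ d ≠ 0 := by
    rw [show q ^ (d + 1) - q ^ d = q ^ d * (q - 1) by ring]
    exact mul_ne_zero hqd hq1
  rw [eq_div_iff hden]
  field_simp
  have hqq : q ^ d * q⁻¹ ^ d = 1 := by rw [inv_pow, mul_inv_cancel₀ hqd]
  linear_combination (q * S - S) * hqq
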